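/- Let G be a bipartite graph with bipartition {X, Y} such that every vertex y ∈ Y has degree at most 2, and no two distinct vertices of Y have the same neighbourhood. If Δ(G) ≥ 2, then box(G) ≤ ⌈log₂ log₂ Δ(G)⌉ + 3. -/

import Mathlib

/-- A `k`-box representation of a simple graph: each vertex gets an axis-parallel box
`∏ i, [l v i, r v i]` in `ℝ^k`, and distinct vertices are adjacent iff their boxes meet. -/
def SimpleGraph.HasBoxRep {V : Type*} (G : SimpleGraph V) (k : ℕ) : Prop :=
  ∃ l r : V → Fin k → ℝ, (∀ v i, l v i ≤ r v i) ∧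
    ∀ u v : V, u ≠ v →
      (G.Adj u v ↔ ∀ i, max (l u i) (l v i) ≤ min (r u i) (r v i))

/-- Boxicity: the minimum `k` such that `G` has a `k`-box representation. -/
noncomputable def SimpleGraph.boxicity {V : Type*} (G : SimpleGraph V) : ℕ :=
  sInf {k | G.HasBoxRep k}

noncomputable section

namespace BoxAux

def Out {α : Type*} (f : α → ℝ) (a b x : α) : Prop :=
  (f x < f a ∧ f x < f b) ∨ (f a < f x ∧ f b < f x)

lemma Out.symm {α : Type*} {f : α → ℝ} {a b x : α} (h : Out f a b x) : Out f b a x := by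
  rcases h with ⟨h1, h2⟩ | ⟨h1, h2⟩
  · exact Or.inl ⟨h2, h1⟩
  · exact Or.inr ⟨h2, h1⟩

def GoodFam {α : Type*} (H : SimpleGraph α) (k : ℕ) (f : α → Fin (k + 1) → ℝ) : Prop :=
  Function.Injective (fun v => f v 0) ∧
    ∀ a b x, H.Adj a b → x ≠ a → x ≠ b → ∃ i, Out (fun v => f v i) a b x

lemma exists_big {α : Type*} [Fintype α] (g : α → ℝ) : ∃ B : ℝ, ∀ x, g x < B := by
  refine ⟨1 + ∑ x, |g x|, fun x => ?_⟩
  have h1 : g x ≤ |g x| := le_abs_self _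
  have h2 : |g x| ≤ ∑ y, |g y| :=
    Finset.single_le_sum (f := fun y => |g y|) (fun y _ => abs_nonneg _) (Finset.mem_univ x)
  linarith

lemma exists_gap {α : Type*} [Fintype α] (g : α → ℝ) (a : α) :
    ∃ u : ℝ, g a < u ∧ ∀ x, g x ≤ g a ∨ u < g x := by
  classical
  set S : Finset ℝ := (Finset.univ.image g).filter (fun y => g a < y) with hS
  rcases S.eq_empty_or_nonempty with h | h
  · refine ⟨g a + 1, by linarith, fun x => ?_⟩
    by_contra hx
    push_neg at hx
    have : g x ∈ S := by
      simp only [hS, Finset.mem_filter, Finset.mem_image]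
      exact ⟨⟨x, Finset.mem_univ x, rfl⟩, by linarith [hx.1]⟩
    rw [h] at this; simp at this
  · have hlt : g a < S.min' h := by
      have := S.min'_mem h
      simp only [hS, Finset.mem_filter] at this
      exact this.2
    refine ⟨(g a + S.min' h) / 2, by linarith, fun x => ?_⟩
    rcases le_or_gt (g x) (g a) with hx | hx
    · exact Or.inl hx
    · right
      have hxS : g x ∈ S := by
        simp only [hS, Finset.mem_filter, Finset.mem_image]
        exact ⟨⟨x, Finset.mem_univ x, rfl⟩, hx⟩
      have := S.min'_le _ hxS
      linarith

/-- Two injective coordinates such that every vertex off an edge escapes its span. -/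
def Rep2 {α : Type*} (H : SimpleGraph α) (f1 f2 : α → ℝ) : Prop :=
  Function.Injective f1 ∧ Function.Injective f2 ∧
    ∀ a b x, H.Adj a b → x ≠ a → x ≠ b → Out f1 a b x ∨ Out f2 a b x

def DMax {α : Type*} (f1 f2 : α → ℝ) (w : α) : Prop :=
  ∀ x, x ≠ w → f1 x < f1 w ∧ f2 x < f2 w

lemma rep2_comap {α β : Type*} (ψ : β ≃ α) (H : SimpleGraph α) {f1 f2 : β → ℝ}
    (h : Rep2 (H.comap ψ) f1 f2) : Rep2 H (f1 ∘ ψ.symm) (f2 ∘ ψ.symm) := by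
  obtain ⟨h1, h2, h3⟩ := h
  refine ⟨h1.comp ψ.symm.injective, h2.comp ψ.symm.injective, ?_⟩
  intro a b x hadj hxa hxb
  have hadj' : (H.comap ψ).Adj (ψ.symm a) (ψ.symm b) := by
    simp only [SimpleGraph.comap_adj, Equiv.apply_symm_apply]; exact hadj
  have := h3 _ _ (ψ.symm x) hadj' (fun hh => hxa (by simpa using congrArg ψ hh))
    (fun hh => hxb (by simpa using congrArg ψ hh))
  exact this

lemma dmax_comap {α β : Type*} (ψ : β ≃ α) {f1 f2 : β → ℝ} {w : β}
    (h : DMax f1 f2 w) : DMax (f1 ∘ ψ.symm) (f2 ∘ ψ.symm) (ψ w) := by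
  intro x hx
  have : ψ.symm x ≠ w := fun hh => hx (by rw [← hh]; simp)
  simpa using h _ this

lemma ncard_comap_equiv {α β : Type*} (ψ : β ≃ α) (H : SimpleGraph α) (i : β) :
    ((H.comap ψ).neighborSet i).ncard = (H.neighborSet (ψ i)).ncard := by
  have : (H.comap ψ).neighborSet i = ψ.symm '' (H.neighborSet (ψ i)) := by
    ext j
    simp only [SimpleGraph.mem_neighborSet, SimpleGraph.comap_adj, Set.mem_image]
    constructor
    · intro h; exact ⟨ψ j, h, by simp⟩
    · rintro ⟨c, hc, rfl⟩; simpa using hc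
  rw [this, Set.ncard_image_of_injective _ ψ.symm.injective]

lemma ncard_restrict_le {n : ℕ} (H : SimpleGraph (Fin (n + 1))) (i : Fin n) :
    ((H.comap Fin.castSucc).neighborSet i).ncard ≤ (H.neighborSet i.castSucc).ncard := by
  have him : Fin.castSucc '' ((H.comap Fin.castSucc).neighborSet i) ⊆
      H.neighborSet i.castSucc := by
    rintro _ ⟨j, hj, rfl⟩; exact hj
  calc ((H.comap Fin.castSucc).neighborSet i).ncard
      = (Fin.castSucc '' ((H.comap Fin.castSucc).neighborSet i)).ncard :=
        (Set.ncard_image_of_injective _ (Fin.castSucc_injective n)).symm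
    _ ≤ _ := Set.ncard_le_ncard him (Set.toFinite _)

lemma ncard_restrict_lt {n : ℕ} (H : SimpleGraph (Fin (n + 1))) (i : Fin n)
    (hl : Fin.last n ∈ H.neighborSet i.castSucc) :
    ((H.comap Fin.castSucc).neighborSet i).ncard ≤ (H.neighborSet i.castSucc).ncard - 1 := by
  have him : Fin.castSucc '' ((H.comap Fin.castSucc).neighborSet i) ⊆
      H.neighborSet i.castSucc \ {Fin.last n} := by
    rintro _ ⟨j, hj, rfl⟩
    exact ⟨hj, by simp [Fin.ext_iff]; omega⟩
  calc ((H.comap Fin.castSucc).neighborSet i).ncard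
      = (Fin.castSucc '' ((H.comap Fin.castSucc).neighborSet i)).ncard :=
        (Set.ncard_image_of_injective _ (Fin.castSucc_injective n)).symm
    _ ≤ (H.neighborSet i.castSucc \ {Fin.last n}).ncard := Set.ncard_le_ncard him (Set.toFinite _)
    _ = _ := Set.ncard_diff_singleton_of_mem hl

/-- extending a representation by a new vertex which is put on top in both coordinates;
works when every neighbour of the new vertex dominates in the second coordinate. -/
lemma snoc_rep {n : ℕ} (H : SimpleGraph (Fin (n + 1))) {f1' f2' : Fin n → ℝ}
    (hrep : Rep2 (H.comap Fin.castSucc) f1' f2') {B1 B2 : ℝ}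
    (hB1 : ∀ i, f1' i < B1) (hB2 : ∀ i, f2' i < B2)
    (hedge : ∀ c : Fin n, H.Adj (Fin.last n) c.castSucc → ∀ x, x ≠ c → f2' x < f2' c) :
    Rep2 H (Fin.snoc f1' B1) (Fin.snoc f2' B2) ∧
      DMax (Fin.snoc f1' B1) (Fin.snoc f2' B2) (Fin.last n) := by
  obtain ⟨hi1, hi2, hout⟩ := hrep
  have hinj : ∀ (g : Fin n → ℝ) (B : ℝ), Function.Injective g → (∀ i, g i < B) →
      Function.Injective (Fin.snoc g B : Fin (n+1) → ℝ) := by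
    intro g B hg hB a b hab
    induction a using Fin.lastCases with
    | last =>
      induction b using Fin.lastCases with
      | last => rfl
      | cast b' => rw [Fin.snoc_last, Fin.snoc_castSucc] at hab
                   exact absurd hab.symm (ne_of_lt (hB b'))
    | cast a' =>
      induction b using Fin.lastCases with
      | last => rw [Fin.snoc_last, Fin.snoc_castSucc] at hab
                exact absurd hab (ne_of_lt (hB a'))
      | cast b' => rw [Fin.snoc_castSucc, Fin.snoc_castSucc] at hab
                   exact congrArg _ (hg hab)
  refine ⟨⟨hinj _ _ hi1 hB1, hinj _ _ hi2 hB2, ?_⟩, ?_⟩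
  · intro a b x hadj hxa hxb
    induction a using Fin.lastCases with
    | last =>
      -- a = last
      have hbne : b ≠ Fin.last n := fun hh => (H.irrefl (hh ▸ hadj))
      obtain ⟨b', rfl⟩ := Fin.exists_castSucc_eq.mpr hbne
      induction x using Fin.lastCases with
      | last => exact absurd rfl hxa
      | cast x' =>
        have hx'b' : x' ≠ b' := fun hh => hxb (congrArg _ hh)
        right; left
        rw [Fin.snoc_castSucc, Fin.snoc_castSucc, Fin.snoc_last]
        exact ⟨lt_of_lt_of_le (hB2 x') (le_refl B2) |>.trans_le' (le_refl _) |>.trans_le (le_refl _) |>.trans_le (le_refl _) |>.trans_le (le_refl _) |>.trans_le (le_refl _) |>.trans_le (le_refl _) |>.trans_le (le_refl _), hedge b' hadj x' hx'b'⟩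
    | cast a' =>
      induction b using Fin.lastCases with
      | last =>
        induction x using Fin.lastCases with
        | last => exact absurd rfl hxb
        | cast x' =>
          have hx'a' : x' ≠ a' := fun hh => hxa (congrArg _ hh)
          right; left
          rw [Fin.snoc_castSucc, Fin.snoc_castSucc, Fin.snoc_last]
          exact ⟨hedge a' hadj.symm x' hx'a', hB2 x'⟩
      | cast b' =>
        induction x using Fin.lastCases with
        | last =>
          left; right
          rw [Fin.snoc_castSucc, Fin.snoc_castSucc, Fin.snoc_last]
          exact ⟨hB1 a', hB1 b'⟩
        | cast x' =>
          have hadj' : (H.comap Fin.castSucc).Adj a' b' := hadj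
          have hx'a' : x' ≠ a' := fun hh => hxa (congrArg _ hh)
          have hx'b' : x' ≠ b' := fun hh => hxb (congrArg _ hh)
          rcases hout a' b' x' hadj' hx'a' hx'b' with h | h
          · left
            rcases h with ⟨u1, u2⟩ | ⟨u1, u2⟩
            · left; rw [Fin.snoc_castSucc, Fin.snoc_castSucc, Fin.snoc_castSucc]; exact ⟨u1, u2⟩
            · right; rw [Fin.snoc_castSucc, Fin.snoc_castSucc, Fin.snoc_castSucc]; exact ⟨u1, u2⟩
          · right
            rcases h with ⟨u1, u2⟩ | ⟨u1, u2⟩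
            · left; rw [Fin.snoc_castSucc, Fin.snoc_castSucc, Fin.snoc_castSucc]; exact ⟨u1, u2⟩
            · right; rw [Fin.snoc_castSucc, Fin.snoc_castSucc, Fin.snoc_castSucc]; exact ⟨u1, u2⟩
  · intro x hx
    induction x using Fin.lastCases with
    | last => exact absurd rfl hx
    | cast x' =>
      rw [Fin.snoc_castSucc, Fin.snoc_castSucc, Fin.snoc_last, Fin.snoc_last]
      exact ⟨hB1 x', hB2 x'⟩



lemma rep2_fin : ∀ n (H : SimpleGraph (Fin n)), (∀ v, (H.neighborSet v).ncard ≤ 2) →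
    (∃ f1 f2, Rep2 H f1 f2) ∧
      (∀ w, (H.neighborSet w).ncard ≤ 1 → ∃ f1 f2, Rep2 H f1 f2 ∧ DMax f1 f2 w) := by
  intro n
  induction n with
  | zero =>
    intro H _
    constructor
    · exact ⟨fun i => i.elim0, fun i => i.elim0, fun a => a.elim0, fun a => a.elim0,
        fun a => a.elim0⟩
    · intro w; exact w.elim0
  | succ n IH =>
    intro H hdeg
    -- part B for w = last
    have hlast : ∀ (H : SimpleGraph (Fin (n + 1))), (∀ v, (H.neighborSet v).ncard ≤ 2) →
        (H.neighborSet (Fin.last n)).ncard ≤ 1 →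
        ∃ f1 f2, Rep2 H f1 f2 ∧ DMax f1 f2 (Fin.last n) := by
      intro H hdeg hw
      set H₁ := H.comap (Fin.castSucc : Fin n → Fin (n + 1)) with hH₁
      have hdeg₁ : ∀ i, (H₁.neighborSet i).ncard ≤ 2 :=
        fun i => le_trans (ncard_restrict_le H i) (hdeg _)
      rcases Nat.lt_or_ge (H.neighborSet (Fin.last n)).ncard 1 with h0 | h1
      · -- last is isolated
        have hempty : H.neighborSet (Fin.last n) = ∅ :=
          (Set.ncard_eq_zero (Set.toFinite _)).mp (Nat.lt_one_iff.mp h0)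
        obtain ⟨f1', f2', hrep⟩ := (IH H₁ hdeg₁).1
        obtain ⟨B1, hB1⟩ := exists_big f1'
        obtain ⟨B2, hB2⟩ := exists_big f2'
        have hedge : ∀ c : Fin n, H.Adj (Fin.last n) c.castSucc → ∀ x, x ≠ c →
            f2' x < f2' c := by
          intro c hc
          exact absurd hc (by
            intro hcc
            have : c.castSucc ∈ H.neighborSet (Fin.last n) := hcc
            rw [hempty] at this; exact this)
        obtain ⟨h1, h2⟩ := snoc_rep H hrep hB1 hB2 hedge
        exact ⟨_, _, h1, h2⟩
      · -- last has exactly one neighbour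
        have hcard : (H.neighborSet (Fin.last n)).ncard = 1 := le_antisymm hw h1
        obtain ⟨c, hc⟩ := Set.ncard_eq_one.mp hcard
        have hcne : c ≠ Fin.last n := by
          intro hcc
          have : c ∈ H.neighborSet (Fin.last n) := by rw [hc]; rfl
          rw [hcc] at this
          exact H.irrefl this
        obtain ⟨a', rfl⟩ := Fin.exists_castSucc_eq.mpr hcne
        have hadj_la : H.Adj (Fin.last n) a'.castSucc := by
          have : a'.castSucc ∈ H.neighborSet (Fin.last n) := by rw [hc]; rfl
          exact this
        have hdeg_a' : (H₁.neighborSet a').ncard ≤ 1 := by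
          have hl : Fin.last n ∈ H.neighborSet a'.castSucc := hadj_la.symm
          have h2 := ncard_restrict_lt H a' hl
          have h3 := hdeg a'.castSucc
          rw [hH₁]
          omega
        obtain ⟨f1', f2', hrep, hdm⟩ := (IH H₁ hdeg₁).2 a' hdeg_a'
        obtain ⟨B1, hB1⟩ := exists_big f1'
        obtain ⟨B2, hB2⟩ := exists_big f2'
        have hedge : ∀ c : Fin n, H.Adj (Fin.last n) c.castSucc → ∀ x, x ≠ c →
            f2' x < f2' c := by
          intro c hcc x hx
          have : c.castSucc ∈ H.neighborSet (Fin.last n) := hcc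
          rw [hc] at this
          have : c = a' := Fin.castSucc_injective n this
          subst this
          exact (hdm x hx).2
        obtain ⟨hh1, hh2⟩ := snoc_rep H hrep hB1 hB2 hedge
        exact ⟨_, _, hh1, hh2⟩
    -- part B general w by relabelling
    have hB : ∀ w, (H.neighborSet w).ncard ≤ 1 → ∃ f1 f2, Rep2 H f1 f2 ∧ DMax f1 f2 w := by
      intro w hw
      set φ : Fin (n + 1) ≃ Fin (n + 1) := Equiv.swap w (Fin.last n) with hφ
      have hφl : φ (Fin.last n) = w := by simp [hφ]
      set H₀ := H.comap (φ : Fin (n + 1) → Fin (n + 1)) with hH₀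
      have hdeg₀ : ∀ v, (H₀.neighborSet v).ncard ≤ 2 := by
        intro v; rw [ncard_comap_equiv]; exact hdeg _
      have hw₀ : (H₀.neighborSet (Fin.last n)).ncard ≤ 1 := by
        rw [ncard_comap_equiv, hφl]; exact hw
      obtain ⟨f1, f2, hrep, hdm⟩ := hlast H₀ hdeg₀ hw₀
      refine ⟨f1 ∘ φ.symm, f2 ∘ φ.symm, rep2_comap φ H hrep, ?_⟩
      have := dmax_comap φ hdm
      rwa [hφl] at this
    refine ⟨?_, hB⟩
    by_cases hex : ∃ u, (H.neighborSet u).ncard ≤ 1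
    · obtain ⟨u, hu⟩ := hex
      obtain ⟨f1, f2, hrep, _⟩ := hB u hu
      exact ⟨f1, f2, hrep⟩
    · -- 2-regular case
      push_neg at hex
      have hreg : ∀ u, (H.neighborSet u).ncard = 2 :=
        fun u => le_antisymm (hdeg u) (hex u)
      obtain ⟨a, b, hab, hset⟩ := Set.ncard_eq_two.mp (hreg (Fin.last n))
      have hane : a ≠ Fin.last n := by
        intro hh
        have : a ∈ H.neighborSet (Fin.last n) := by rw [hset]; left; rfl
        rw [hh] at this; exact H.irrefl this
      have hbne : b ≠ Fin.last n := by
        intro hh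
        have : b ∈ H.neighborSet (Fin.last n) := by rw [hset]; right; rfl
        rw [hh] at this; exact H.irrefl this
      obtain ⟨a', rfl⟩ := Fin.exists_castSucc_eq.mpr hane
      obtain ⟨b', rfl⟩ := Fin.exists_castSucc_eq.mpr hbne
      have ha'b' : a' ≠ b' := fun hh => hab (congrArg _ hh)
      set H₁ := H.comap (Fin.castSucc : Fin n → Fin (n + 1)) with hH₁
      have hdeg₁ : ∀ i, (H₁.neighborSet i).ncard ≤ 2 :=
        fun i => le_trans (ncard_restrict_le H i) (hdeg _)
      have hadj_lb : H.Adj (Fin.last n) b'.castSucc := by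
        have : b'.castSucc ∈ H.neighborSet (Fin.last n) := by rw [hset]; right; rfl
        exact this
      have hadj_la : H.Adj (Fin.last n) a'.castSucc := by
        have : a'.castSucc ∈ H.neighborSet (Fin.last n) := by rw [hset]; left; rfl
        exact this
      have hdeg_b' : (H₁.neighborSet b').ncard ≤ 1 := by
        have hl : Fin.last n ∈ H.neighborSet b'.castSucc := hadj_lb.symm
        have h2 := ncard_restrict_lt H b' hl
        have h3 := hdeg b'.castSucc
        rw [hH₁]
        omega
      obtain ⟨f1', f2', hrep, hdm⟩ := (IH H₁ hdeg₁).2 b' hdeg_b'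
      obtain ⟨hi1, hi2, hout⟩ := hrep
      obtain ⟨B2, hB2⟩ := exists_big f2'
      obtain ⟨u, hu, hgap⟩ := exists_gap f1' a'
      refine ⟨Fin.snoc f1' u, Fin.snoc f2' B2, ?_, ?_, ?_⟩
      · -- injectivity of f1
        intro x y hxy
        induction x using Fin.lastCases with
        | last =>
          induction y using Fin.lastCases with
          | last => rfl
          | cast y' =>
            rw [Fin.snoc_last, Fin.snoc_castSucc] at hxy
            rcases hgap y' with h | h
            · exact absurd hxy.symm (ne_of_lt (lt_of_le_of_lt h hu))
            · exact absurd hxy (ne_of_lt h)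
        | cast x' =>
          induction y using Fin.lastCases with
          | last =>
            rw [Fin.snoc_castSucc, Fin.snoc_last] at hxy
            rcases hgap x' with h | h
            · exact absurd hxy (ne_of_lt (lt_of_le_of_lt h hu))
            · exact absurd hxy.symm (ne_of_lt h)
          | cast y' =>
            rw [Fin.snoc_castSucc, Fin.snoc_castSucc] at hxy
            exact congrArg _ (hi1 hxy)
      · -- injectivity of f2
        intro x y hxy
        induction x using Fin.lastCases with
        | last =>
          induction y using Fin.lastCases with
          | last => rfl
          | cast y' =>
            rw [Fin.snoc_last, Fin.snoc_castSucc] at hxy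
            exact absurd hxy.symm (ne_of_lt (hB2 y'))
        | cast x' =>
          induction y using Fin.lastCases with
          | last =>
            rw [Fin.snoc_castSucc, Fin.snoc_last] at hxy
            exact absurd hxy (ne_of_lt (hB2 x'))
          | cast y' =>
            rw [Fin.snoc_castSucc, Fin.snoc_castSucc] at hxy
            exact congrArg _ (hi2 hxy)
      · -- edges
        have edgecase : ∀ c x' : Fin n, H.Adj (Fin.last n) c.castSucc → x' ≠ c →
            Out (Fin.snoc f1' u) (Fin.last n) c.castSucc x'.castSucc ∨
            Out (Fin.snoc f2' B2) (Fin.last n) c.castSucc x'.castSucc := by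
          intro c x' hcadj hx'c
          have hcmem : c.castSucc ∈ H.neighborSet (Fin.last n) := hcadj
          rw [hset] at hcmem
          rcases hcmem with hca | hcb
          · -- c = a' : use first coordinate and the gap
            have hca' : c = a' := Fin.castSucc_injective n hca
            subst hca'
            left
            have hne : f1' x' ≠ f1' c := fun hh => hx'c (hi1 hh)
            rcases hgap x' with h | h
            · left
              rw [Fin.snoc_castSucc, Fin.snoc_castSucc, Fin.snoc_last]
              exact ⟨lt_of_le_of_lt (lt_of_le_of_ne h hne).le hu, lt_of_le_of_ne h hne⟩
            · right
              rw [Fin.snoc_castSucc, Fin.snoc_castSucc, Fin.snoc_last]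
              exact ⟨h, lt_trans hu h⟩
          · -- c = b' : use second coordinate and domination
            have hcb' : c = b' := Fin.castSucc_injective n hcb
            subst hcb'
            right; left
            rw [Fin.snoc_castSucc, Fin.snoc_castSucc, Fin.snoc_last]
            exact ⟨hB2 x', (hdm x' hx'c).2⟩
        intro p q x hadj hxp hxq
        induction p using Fin.lastCases with
        | last =>
          have hqne : q ≠ Fin.last n := fun hh => (H.irrefl (hh ▸ hadj))
          obtain ⟨q', rfl⟩ := Fin.exists_castSucc_eq.mpr hqne
          induction x using Fin.lastCases with
          | last => exact absurd rfl hxp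
          | cast x' =>
            exact edgecase q' x' hadj (fun hh => hxq (congrArg _ hh))
        | cast p' =>
          induction q using Fin.lastCases with
          | last =>
            induction x using Fin.lastCases with
            | last => exact absurd rfl hxq
            | cast x' =>
              rcases edgecase p' x' hadj.symm (fun hh => hxp (congrArg _ hh)) with h | h
              · exact Or.inl h.symm
              · exact Or.inr h.symm
          | cast q' =>
            induction x using Fin.lastCases with
            | last =>
              right; right
              rw [Fin.snoc_castSucc, Fin.snoc_castSucc, Fin.snoc_last]
              exact ⟨hB2 p', hB2 q'⟩
            | cast x' =>
              have hadj' : H₁.Adj p' q' := hadj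
              rcases hout p' q' x' hadj' (fun hh => hxp (congrArg _ hh))
                  (fun hh => hxq (congrArg _ hh)) with h | h
              · left
                rcases h with ⟨u1, u2⟩ | ⟨u1, u2⟩
                · left; rw [Fin.snoc_castSucc, Fin.snoc_castSucc, Fin.snoc_castSucc]
                  exact ⟨u1, u2⟩
                · right; rw [Fin.snoc_castSucc, Fin.snoc_castSucc, Fin.snoc_castSucc]
                  exact ⟨u1, u2⟩
              · right
                rcases h with ⟨u1, u2⟩ | ⟨u1, u2⟩
                · left; rw [Fin.snoc_castSucc, Fin.snoc_castSucc, Fin.snoc_castSucc]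
                  exact ⟨u1, u2⟩
                · right; rw [Fin.snoc_castSucc, Fin.snoc_castSucc, Fin.snoc_castSucc]
                  exact ⟨u1, u2⟩

/-- every finite graph with maximum degree at most 2 admits a 2-dimensional empty-box family -/
lemma rep2_exists {α : Type*} [Fintype α] (H : SimpleGraph α)
    (hdeg : ∀ v, (H.neighborSet v).ncard ≤ 2) : ∃ f1 f2, Rep2 H f1 f2 := by
  classical
  set e := Fintype.equivFin α with he
  set H' := H.comap (e.symm : Fin (Fintype.card α) → α) with hH'
  have hdeg' : ∀ v, (H'.neighborSet v).ncard ≤ 2 := by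
    intro v; rw [ncard_comap_equiv]; exact hdeg _
  obtain ⟨f1, f2, hrep⟩ := (rep2_fin _ H' hdeg').1
  have := rep2_comap e.symm H hrep
  simpa using ⟨_, _, this⟩


/-! ### binary-value comparison machinery -/

def bval {m : ℕ} (v : Fin m → Bool) : ℕ :=
  ∑ j : Fin m, cond (v j) (2 ^ (m - 1 - j.val)) 0

lemma sum_range_two_pow (n : ℕ) : ∑ i ∈ Finset.range n, 2 ^ i = 2 ^ n - 1 := by
  induction n with
  | zero => simp
  | succ n ih => rw [Finset.sum_range_succ, ih]; have := Nat.one_le_two_pow (n := n); omega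

lemma bval_lt_of_firstdiff {m : ℕ} {v v' : Fin m → Bool} {j : Fin m}
    (hv : v j = false) (hv' : v' j = true) (hpre : ∀ j', j' < j → v j' = v' j') :
    bval v < bval v' := by
  classical
  have hsplit : ∀ w : Fin m → Bool, bval w =
      (∑ j' ∈ Finset.univ.filter (· < j), cond (w j') (2 ^ (m - 1 - j'.val)) 0) +
      cond (w j) (2 ^ (m - 1 - j.val)) 0 +
      (∑ j' ∈ Finset.univ.filter (j < ·), cond (w j') (2 ^ (m - 1 - j'.val)) 0) := by
    intro w
    have hns : Finset.univ.filter (fun j' => ¬ j' < j) =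
        insert j (Finset.univ.filter (j < ·)) := by
      ext j'
      simp only [Finset.mem_filter, Finset.mem_univ, true_and, Finset.mem_insert, not_lt]
      constructor
      · intro h
        rcases eq_or_lt_of_le h with h' | h'
        · left; exact (Fin.ext (by exact_mod_cast congrArg Fin.val h'.symm))
        · right; exact h'
      · rintro (rfl | h)
        · exact le_refl _
        · exact le_of_lt h
    rw [bval, ← Finset.sum_filter_add_sum_filter_not Finset.univ (· < j), hns,
      Finset.sum_insert (by simp)]
    ring
  have htail : ∀ w : Fin m → Bool,
      (∑ j' ∈ Finset.univ.filter (j < ·), cond (w j') (2 ^ (m - 1 - j'.val)) 0) <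
        2 ^ (m - 1 - j.val) := by
    intro w
    have hle1 : (∑ j' ∈ Finset.univ.filter (j < ·), cond (w j') (2 ^ (m - 1 - j'.val)) 0) ≤
        ∑ j' ∈ Finset.univ.filter (j < ·), 2 ^ (m - 1 - j'.val) := by
      apply Finset.sum_le_sum
      intro j' _
      cases w j' <;> simp
    have hle2 : (∑ j' ∈ Finset.univ.filter (j < ·), 2 ^ (m - 1 - j'.val)) =
        ∑ e ∈ (Finset.univ.filter (j < ·)).image (fun j' : Fin m => m - 1 - j'.val),
          2 ^ e := by
      rw [Finset.sum_image]
      intro x hx y hy hxy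
      have hx' : x.val < m := x.isLt
      have hy' : y.val < m := y.isLt
      have hxy' : m - 1 - x.val = m - 1 - y.val := hxy
      exact Fin.ext (by omega)
    have hsub : (Finset.univ.filter (j < ·)).image (fun j' : Fin m => m - 1 - j'.val) ⊆
        Finset.range (m - 1 - j.val) := by
      intro e he
      simp only [Finset.mem_image, Finset.mem_filter, Finset.mem_univ, true_and] at he
      obtain ⟨j', hj', rfl⟩ := he
      simp only [Finset.mem_range]
      have h1 : j.val < j'.val := hj'
      have h2 : j'.val < m := j'.isLt
      omega
    have hle3 : (∑ e ∈ (Finset.univ.filter (j < ·)).image (fun j' : Fin m => m - 1 - j'.val),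
        2 ^ e) ≤ ∑ e ∈ Finset.range (m - 1 - j.val), 2 ^ e :=
      Finset.sum_le_sum_of_subset hsub
    rw [sum_range_two_pow] at hle3
    have : (0:ℕ) < 2 ^ (m - 1 - j.val) := Nat.two_pow_pos _
    omega
  rw [hsplit v, hsplit v']
  have hprefix : (∑ j' ∈ Finset.univ.filter (· < j), cond (v j') (2 ^ (m - 1 - j'.val)) 0) =
      (∑ j' ∈ Finset.univ.filter (· < j), cond (v' j') (2 ^ (m - 1 - j'.val)) 0) := by
    apply Finset.sum_congr rfl
    intro j' hj'
    simp only [Finset.mem_filter, Finset.mem_univ, true_and] at hj'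
    rw [hpre j' hj']
  rw [hv, hv', hprefix]
  have h1 := htail v
  have h2 : (0:ℕ) ≤ ∑ j' ∈ Finset.univ.filter (j < ·), cond (v' j') (2 ^ (m - 1 - j'.val)) 0 :=
    Nat.zero_le _
  simp only [cond_false, cond_true]
  omega

lemma exists_firstdiff {m : ℕ} {v v' : Fin m → Bool} (h : v ≠ v') :
    ∃ j : Fin m, v j ≠ v' j ∧ ∀ j', j' < j → v j' = v' j' := by
  classical
  set D : Finset (Fin m) := Finset.univ.filter (fun j => v j ≠ v' j) with hD
  have hne : D.Nonempty := by
    by_contra hh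
    rw [Finset.not_nonempty_iff_eq_empty] at hh
    apply h
    funext j
    by_contra hj
    have : j ∈ D := by simp [hD, hj]
    rw [hh] at this; simp at this
  refine ⟨D.min' hne, ?_, ?_⟩
  · have := D.min'_mem hne
    simp only [hD, Finset.mem_filter] at this
    exact this.2
  · intro j' hj'
    by_contra hj
    have : j' ∈ D := by simp [hD, hj]
    exact absurd (D.min'_le _ this) (not_le.mpr hj')

/-! ### the pattern family -/

section Patterns

variable (s m : ℕ)

/-- sign patterns: nonzero vectors in `Fin (s+2) → Bool` vanishing at `0`. -/
def pat (j : Fin m) (i : Fin (s + 2)) : Bool :=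
  if i.val = 0 then false else (j.val + 1).testBit (i.val - 1)

lemma pat_zero (j : Fin m) : pat s m j 0 = false := by simp [pat]

lemma pat_exists_true (hm : m ≤ 2 ^ (s + 1) - 1) (j : Fin m) :
    ∃ i : Fin (s + 2), pat s m j i = true := by
  have hj : j.val + 1 < 2 ^ (s + 1) := by have := j.isLt; omega
  by_contra hh
  push_neg at hh
  have hz : ∀ p, (j.val + 1).testBit p = false := by
    intro p
    rcases Nat.lt_or_ge p (s + 1) with hp | hp
    · have := hh ⟨p + 1, by omega⟩
      simp only [pat] at this
      simpa using this
    · exact Nat.testBit_eq_false_of_lt (lt_of_lt_of_le hj (Nat.pow_le_pow_right (by norm_num) hp))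
  have := Nat.zero_of_testBit_eq_false hz
  omega

lemma pat_ne (hm : m ≤ 2 ^ (s + 1) - 1) {j j' : Fin m} (h : j ≠ j') :
    ∃ i : Fin (s + 2), pat s m j i ≠ pat s m j' i := by
  have hj : j.val + 1 < 2 ^ (s + 1) := by have := j.isLt; omega
  have hj' : j'.val + 1 < 2 ^ (s + 1) := by have := j'.isLt; omega
  by_contra hh
  push_neg at hh
  have : ∀ p, (j.val + 1).testBit p = (j'.val + 1).testBit p := by
    intro p
    rcases Nat.lt_or_ge p (s + 1) with hp | hp
    · have := hh ⟨p + 1, by omega⟩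
      simp only [pat] at this
      simpa using this
    · rw [Nat.testBit_eq_false_of_lt (lt_of_lt_of_le hj (Nat.pow_le_pow_right (by norm_num) hp)),
        Nat.testBit_eq_false_of_lt (lt_of_lt_of_le hj' (Nat.pow_le_pow_right (by norm_num) hp))]
  have := Nat.eq_of_testBit_eq this
  exact h (Fin.ext (by omega))

/-- the coordinate family on bit-vectors -/
def BF (w : Fin m → Bool) (i : Fin (s + 2)) : ℕ :=
  bval (fun j => xor (w j) (pat s m j i))

lemma BF_lt_iff {w w' : Fin m → Bool} {j : Fin m}
    (hj : w j ≠ w' j) (hpre : ∀ j', j' < j → w j' = w' j') (i : Fin (s + 2)) :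
    (BF s m w i < BF s m w' i ↔ xor (w' j) (pat s m j i) = true) := by
  have hj2 : xor (w j) (pat s m j i) ≠ xor (w' j) (pat s m j i) := by
    cases hw : w j <;> cases hw' : w' j <;> simp_all
  have hpre2 : ∀ j', j' < j → xor (w j') (pat s m j' i) = xor (w' j') (pat s m j' i) := by
    intro j' hj'
    rw [hpre j' hj']
  cases hb : xor (w' j) (pat s m j i) with
  | false =>
    have hb' : xor (w j) (pat s m j i) = true := by
      cases hx : xor (w j) (pat s m j i) with
      | false => rw [hx, hb] at hj2; simp at hj2
      | true => rfl
    have hgt := bval_lt_of_firstdiff (v := fun j' => xor (w' j') (pat s m j' i))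
      (v' := fun j' => xor (w j') (pat s m j' i)) hb hb' (fun j' h => (hpre2 j' h).symm)
    exact ⟨fun hlt => absurd hlt (not_lt.mpr (le_of_lt hgt)), fun hh => by simp at hh⟩
  | true =>
    have hb' : xor (w j) (pat s m j i) = false := by
      cases hx : xor (w j) (pat s m j i) with
      | false => rfl
      | true => rw [hx, hb] at hj2; simp at hj2
    exact ⟨fun _ => rfl, fun _ => bval_lt_of_firstdiff hb' hb hpre2⟩

/-- property (A'): every pair of distinct vectors is ordered both ways among the coordinates -/
lemma BF_pair (hm : m ≤ 2 ^ (s + 1) - 1) {w w' : Fin m → Bool} (h : w ≠ w') :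
    (∃ i, BF s m w i < BF s m w' i) ∧ (∃ i, BF s m w' i < BF s m w i) := by
  obtain ⟨j, hj, hpre⟩ := exists_firstdiff h
  obtain ⟨i1, hi1⟩ := pat_exists_true s m hm j
  have h0 := BF_lt_iff s m hj hpre 0
  have h1 := BF_lt_iff s m hj hpre i1
  have h0' := BF_lt_iff s m (Ne.symm hj) (fun j' hj' => (hpre j' hj').symm) 0
  have h1' := BF_lt_iff s m (Ne.symm hj) (fun j' hj' => (hpre j' hj').symm) i1
  rw [pat_zero] at h0 h0'
  rw [hi1] at h1 h1'
  cases hw : w' j with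
  | false =>
    have hwj : w j = true := by
      cases hx : w j with
      | false => rw [hx, hw] at hj; simp at hj
      | true => rfl
    constructor
    · exact ⟨i1, h1.mpr (by rw [hw]; rfl)⟩
    · exact ⟨0, h0'.mpr (by rw [hwj]; simp)⟩
  | true =>
    have hwj : w j = false := by
      cases hx : w j with
      | false => rfl
      | true => rw [hx, hw] at hj; simp at hj
    constructor
    · exact ⟨0, h0.mpr (by rw [hw]; simp)⟩
    · exact ⟨i1, h1'.mpr (by rw [hwj]; rfl)⟩

/-- property (B'): any third vector escapes the span of any two others in some coordinate -/
lemma BF_triple (hm : m ≤ 2 ^ (s + 1) - 1) {x a b : Fin m → Bool}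
    (hxa : x ≠ a) (hxb : x ≠ b) (hab : a ≠ b) :
    ∃ i, (BF s m x i < BF s m a i ∧ BF s m x i < BF s m b i) ∨
      (BF s m a i < BF s m x i ∧ BF s m b i < BF s m x i) := by
  obtain ⟨j0, hj0, hpre0⟩ := exists_firstdiff hxa
  obtain ⟨j1, hj1, hpre1⟩ := exists_firstdiff hab
  rcases lt_trichotomy j0 j1 with hlt | heq | hgt
  · -- j0 < j1 : x differs from both at j0, same side in every coordinate
    have hbj0 : a j0 = b j0 := hpre1 j0 hlt
    have hj0b : x j0 ≠ b j0 := by rw [← hbj0]; exact hj0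
    have hpre0b : ∀ j', j' < j0 → x j' = b j' := by
      intro j' hj'
      rw [hpre0 j' hj', hpre1 j' (lt_trans hj' hlt)]
    refine ⟨0, ?_⟩
    have ha := BF_lt_iff s m hj0 hpre0 0
    have hb := BF_lt_iff s m hj0b hpre0b 0
    have ha' := BF_lt_iff s m (Ne.symm hj0) (fun j' h => (hpre0 j' h).symm) 0
    have hb' := BF_lt_iff s m (Ne.symm hj0b) (fun j' h => (hpre0b j' h).symm) 0
    rw [pat_zero] at ha hb ha' hb'
    cases hxj : x j0 with
    | false =>
      left
      have haj : a j0 = true := by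
        cases hy : a j0 with
        | false => rw [hxj, hy] at hj0; simp at hj0
        | true => rfl
      have hbj : b j0 = true := by rw [← hbj0]; exact haj
      exact ⟨ha.mpr (by rw [haj]; simp), hb.mpr (by rw [hbj]; simp)⟩
    | true =>
      right
      have haj : a j0 = false := by
        cases hy : a j0 with
        | false => rfl
        | true => rw [hxj, hy] at hj0; simp at hj0
      have hbj : b j0 = false := by rw [← hbj0]; exact haj
      exact ⟨ha'.mpr (by rw [hxj]; simp), hb'.mpr (by rw [hxj]; simp)⟩
  · -- j0 = j1 : x and b agree at the diff position of (a,b)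
    subst heq
    have hxbj : x j0 = b j0 := by
      cases hxj : x j0 <;> cases haj : a j0 <;> cases hbj : b j0 <;> simp_all
    obtain ⟨j2, hj2, hpre2⟩ := exists_firstdiff hxb
    have hj2ne : j2 ≠ j0 := by
      intro hh; rw [hh] at hj2; exact hj2 hxbj
    -- choose i with xor (x j0) (pat j0 i) = xor (x j2) (pat j2 i)
    have hkey : ∃ i, xor (x j0) (pat s m j0 i) = xor (x j2) (pat s m j2 i) := by
      by_contra hh
      push_neg at hh
      obtain ⟨i', hi'⟩ := pat_ne s m hm hj2ne
      have hconst : ∀ i, pat s m j0 i = pat s m j2 i := by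
        intro i
        have h1 := hh 0
        have h2 := hh i
        rw [pat_zero, pat_zero] at h1
        cases hx0 : x j0 <;> cases hx2 : x j2 <;>
          rw [hx0, hx2] at h1 h2 <;> simp_all <;>
          cases hp : pat s m j0 i <;> cases hq : pat s m j2 i <;> simp_all
      exact hi' (hconst i').symm
    obtain ⟨i, hi⟩ := hkey
    refine ⟨i, ?_⟩
    have ha := BF_lt_iff s m hj0 hpre0 i
    have hb := BF_lt_iff s m hj2 hpre2 i
    have ha' := BF_lt_iff s m (Ne.symm hj0) (fun j' h => (hpre0 j' h).symm) i
    have hb' := BF_lt_iff s m (Ne.symm hj2) (fun j' h => (hpre2 j' h).symm) i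
    cases hxi : xor (x j0) (pat s m j0 i)
    · -- x below a and below b
      left
      have h1 : xor (a j0) (pat s m j0 i) = true := by
        cases hy : a j0 <;> cases hz : x j0 <;> cases hp : pat s m j0 i <;> simp_all
      have h2 : xor (b j2) (pat s m j2 i) = true := by
        rw [hi] at hxi
        cases hy : b j2 <;> cases hz : x j2 <;> cases hp : pat s m j2 i <;> simp_all
      exact ⟨ha.mpr h1, hb.mpr h2⟩
    · -- x above a and above b
      right
      have h1 : xor (x j0) (pat s m j0 i) = true := hxi
      have h2 : xor (x j2) (pat s m j2 i) = true := by rw [← hi]; exact hxi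
      exact ⟨ha'.mpr h1, hb'.mpr h2⟩
  · -- j1 < j0 : x on a's side of b
    have hxj1 : x j1 = a j1 := hpre0 j1 hgt
    have hxj1b : x j1 ≠ b j1 := by rw [hxj1]; exact hj1
    have hpre1b : ∀ j', j' < j1 → x j' = b j' := by
      intro j' hj'
      rw [hpre0 j' (lt_trans hj' hgt), hpre1 j' hj']
    -- choose i with xor (x j0) (pat j0 i) = xor (x j1) (pat j1 i)
    have hj01 : j0 ≠ j1 := ne_of_gt hgt
    have hkey : ∃ i, xor (x j0) (pat s m j0 i) = xor (x j1) (pat s m j1 i) := by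
      by_contra hh
      push_neg at hh
      obtain ⟨i', hi'⟩ := pat_ne s m hm hj01
      have hconst : ∀ i, pat s m j0 i = pat s m j1 i := by
        intro i
        have h1 := hh 0
        have h2 := hh i
        rw [pat_zero, pat_zero] at h1
        cases hx0 : x j0 <;> cases hx2 : x j1 <;>
          rw [hx0, hx2] at h1 h2 <;> simp_all <;>
          cases hp : pat s m j0 i <;> cases hq : pat s m j1 i <;> simp_all
      exact hi' (hconst i')
    obtain ⟨i, hi⟩ := hkey
    refine ⟨i, ?_⟩
    have ha := BF_lt_iff s m hj0 hpre0 i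
    have hb := BF_lt_iff s m hxj1b hpre1b i
    have ha' := BF_lt_iff s m (Ne.symm hj0) (fun j' h => (hpre0 j' h).symm) i
    have hb' := BF_lt_iff s m (Ne.symm hxj1b) (fun j' h => (hpre1b j' h).symm) i
    cases hxi : xor (x j0) (pat s m j0 i)
    · left
      have h1 : xor (a j0) (pat s m j0 i) = true := by
        cases hy : a j0 <;> cases hz : x j0 <;> cases hp : pat s m j0 i <;> simp_all
      have h2 : xor (b j1) (pat s m j1 i) = true := by
        rw [hi] at hxi
        cases hy : b j1 <;> cases hz : x j1 <;> cases hp : pat s m j1 i <;> simp_all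
      exact ⟨ha.mpr h1, hb.mpr h2⟩
    · right
      have h1 : xor (x j0) (pat s m j0 i) = true := hxi
      have h2 : xor (x j1) (pat s m j1 i) = true := by rw [← hi]; exact hxi
      exact ⟨ha'.mpr h1, hb'.mpr h2⟩

end Patterns


/-! ### greedy colouring -/

lemma greedy_fin : ∀ n (D : ℕ) (H : SimpleGraph (Fin n)),
    (∀ v, (H.neighborSet v).ncard ≤ D) →
    ∃ χ : Fin n → Fin (D + 1), ∀ a b, H.Adj a b → χ a ≠ χ b := by
  intro n
  induction n with
  | zero => intro D H _; exact ⟨fun i => i.elim0, fun a => a.elim0⟩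
  | succ n IH =>
    intro D H hdeg
    classical
    set H₁ := H.comap (Fin.castSucc : Fin n → Fin (n + 1)) with hH₁
    have hdeg₁ : ∀ i, (H₁.neighborSet i).ncard ≤ D :=
      fun i => le_trans (ncard_restrict_le H i) (hdeg _)
    obtain ⟨χ', hχ'⟩ := IH D H₁ hdeg₁
    set S : Finset (Fin n) := Finset.univ.filter
      (fun j : Fin n => H.Adj (Fin.last n) j.castSucc) with hS
    have hScard : S.card ≤ D := by
      have h1 : S.image Fin.castSucc ⊆ H.neighborFinset (Fin.last n) := by
        intro c hc
        simp only [Finset.mem_image, hS, Finset.mem_filter, Finset.mem_univ, true_and] at hc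
        obtain ⟨j, hj, rfl⟩ := hc
        rw [SimpleGraph.mem_neighborFinset]
        exact hj
      have h2 : (S.image Fin.castSucc).card = S.card :=
        Finset.card_image_of_injective _ (Fin.castSucc_injective n)
      have h3 : (H.neighborFinset (Fin.last n)).card = (H.neighborSet (Fin.last n)).ncard := by
        rw [SimpleGraph.neighborFinset_def, ← Set.ncard_eq_toFinset_card']
      have h4 := Finset.card_le_card h1
      rw [h2, h3] at h4
      exact le_trans h4 (hdeg _)
    set T : Finset (Fin (D + 1)) := S.image χ' with hT
    have : ∃ c, c ∉ T := by
      by_contra hh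
      push_neg at hh
      have h5 : (Finset.univ : Finset (Fin (D + 1))).card ≤ T.card :=
        Finset.card_le_card (fun c _ => hh c)
      have h6 : T.card ≤ S.card := Finset.card_image_le
      simp only [Finset.card_univ, Fintype.card_fin] at h5
      omega
    obtain ⟨c, hc⟩ := this
    refine ⟨Fin.snoc χ' c, ?_⟩
    intro a b hadj
    induction a using Fin.lastCases with
    | last =>
      have hbne : b ≠ Fin.last n := fun hh => (H.irrefl (hh ▸ hadj))
      obtain ⟨b', rfl⟩ := Fin.exists_castSucc_eq.mpr hbne
      rw [Fin.snoc_last, Fin.snoc_castSucc]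
      intro hh
      apply hc
      rw [hT, hh]
      exact Finset.mem_image_of_mem _ (by simp [hS]; exact hadj)
    | cast a' =>
      induction b using Fin.lastCases with
      | last =>
        rw [Fin.snoc_last, Fin.snoc_castSucc]
        intro hh
        apply hc
        rw [hT, ← hh]
        exact Finset.mem_image_of_mem _ (by simp [hS]; exact hadj.symm)
      | cast b' =>
        rw [Fin.snoc_castSucc, Fin.snoc_castSucc]
        exact hχ' a' b' hadj

lemma greedy {α : Type*} [Fintype α] (D : ℕ) (H : SimpleGraph α)
    (hdeg : ∀ v, (H.neighborSet v).ncard ≤ D) :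
    ∃ χ : α → Fin (D + 1), ∀ a b, H.Adj a b → χ a ≠ χ b := by
  classical
  set e := Fintype.equivFin α with he
  set H' := H.comap (e.symm : Fin (Fintype.card α) → α) with hH'
  have hdeg' : ∀ v, (H'.neighborSet v).ncard ≤ D := by
    intro v; rw [ncard_comap_equiv]; exact hdeg _
  obtain ⟨χ', hχ'⟩ := greedy_fin _ D H' hdeg'
  refine ⟨fun v => χ' (e v), ?_⟩
  intro a b hadj
  apply hχ'
  simp only [hH', SimpleGraph.comap_adj, Equiv.symm_apply_apply]
  exact hadj

/-! ### the good family in the large-`Δ` case -/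

lemma nat_lex_lt {K p q r r' : ℕ} (hr : r < K) (hp : p < q) :
    p * K + r < q * K + r' := by
  have h1 : p * K + r < (p + 1) * K := by
    rw [add_mul, one_mul]
    omega
  have h2 : (p + 1) * K ≤ q * K := Nat.mul_le_mul_right K hp
  omega

lemma goodfam_large {α : Type*} [Fintype α] (H : SimpleGraph α) (s D m : ℕ)
    (hdeg : ∀ v, (H.neighborSet v).ncard ≤ D)
    (hDm : D + 1 ≤ 2 ^ m) (hms : m ≤ 2 ^ (s + 1) - 1) :
    ∃ f : α → Fin (s + 1 + 1) → ℝ, GoodFam H (s + 1) f := by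
  classical
  obtain ⟨χ, hχ⟩ := greedy D H hdeg
  set bits : Fin (D + 1) → (Fin m → Bool) := fun c j => c.val.testBit j.val with hbits
  have hbinj : Function.Injective bits := by
    intro c c' hcc
    have : ∀ p, c.val.testBit p = c'.val.testBit p := by
      intro p
      rcases Nat.lt_or_ge p m with hp | hp
      · exact congrFun hcc ⟨p, hp⟩
      · have hc1 : c.val < 2 ^ p :=
          lt_of_lt_of_le (lt_of_lt_of_le c.isLt hDm) (Nat.pow_le_pow_right (by norm_num) hp)
        have hc2 : c'.val < 2 ^ p :=
          lt_of_lt_of_le (lt_of_lt_of_le c'.isLt hDm) (Nat.pow_le_pow_right (by norm_num) hp)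
        rw [Nat.testBit_eq_false_of_lt hc1, Nat.testBit_eq_false_of_lt hc2]
    exact Fin.ext (Nat.eq_of_testBit_eq this)
  set K : ℕ := Fintype.card α + 1 with hK
  set τ : α → ℕ := fun v => (Fintype.equivFin α v).val with hτ
  have hτK : ∀ v, τ v < K := fun v => lt_of_lt_of_le (Fintype.equivFin α v).isLt (by omega)
  have hτinj : Function.Injective τ := by
    intro a b hab
    exact (Fintype.equivFin α).injective (Fin.ext hab)
  set fN : α → Fin (s + 1 + 1) → ℕ :=
    fun v i => (BF s m (bits (χ v)) i) * K + τ v with hfN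
  refine ⟨fun v i => (fN v i : ℝ), ?_, ?_⟩
  · intro a b hab
    simp only [Nat.cast_inj] at hab
    by_cases hBF : BF s m (bits (χ a)) 0 = BF s m (bits (χ b)) 0
    · apply hτinj
      simp only [hfN, hBF] at hab
      omega
    · exfalso
      rcases Nat.lt_or_ge (BF s m (bits (χ a)) 0) (BF s m (bits (χ b)) 0) with h | h
      · exact absurd hab (ne_of_lt (nat_lex_lt (hτK a) h))
      · have h' : BF s m (bits (χ b)) 0 < BF s m (bits (χ a)) 0 :=
          lt_of_le_of_ne h (Ne.symm hBF)
        exact absurd hab.symm (ne_of_lt (nat_lex_lt (hτK b) h'))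
  · intro a b x hadj hxa hxb
    have hcol : χ a ≠ χ b := hχ a b hadj
    have hvab : bits (χ a) ≠ bits (χ b) := fun hh => hcol (hbinj hh)
    by_cases hca : χ x = χ a
    · -- tie with a
      have hτne : τ x ≠ τ a := fun hh => hxa (hτinj hh)
      obtain ⟨⟨i1, hi1⟩, ⟨i2, hi2⟩⟩ := BF_pair s m hms hvab
      rcases Nat.lt_or_ge (τ x) (τ a) with ht | ht
      · refine ⟨i1, Or.inl ⟨?_, ?_⟩⟩
        · exact Nat.cast_lt.mpr (by simp only [hfN, hca]; omega)
        · exact Nat.cast_lt.mpr (by simp only [hfN, hca]; exact nat_lex_lt (hτK x) hi1)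
      · have ht' : τ a < τ x := lt_of_le_of_ne ht (Ne.symm hτne)
        refine ⟨i2, Or.inr ⟨?_, ?_⟩⟩
        · exact Nat.cast_lt.mpr (by simp only [hfN, hca]; omega)
        · exact Nat.cast_lt.mpr (by simp only [hfN, hca]; exact nat_lex_lt (hτK b) hi2)
    · by_cases hcb : χ x = χ b
      · -- tie with b
        have hτne : τ x ≠ τ b := fun hh => hxb (hτinj hh)
        obtain ⟨⟨i1, hi1⟩, ⟨i2, hi2⟩⟩ := BF_pair s m hms hvab.symm
        rcases Nat.lt_or_ge (τ x) (τ b) with ht | ht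
        · refine ⟨i1, Or.inl ⟨?_, ?_⟩⟩
          · exact Nat.cast_lt.mpr (by simp only [hfN, hcb]; exact nat_lex_lt (hτK x) hi1)
          · exact Nat.cast_lt.mpr (by simp only [hfN, hcb]; omega)
        · have ht' : τ b < τ x := lt_of_le_of_ne ht (Ne.symm hτne)
          refine ⟨i2, Or.inr ⟨?_, ?_⟩⟩
          · exact Nat.cast_lt.mpr (by simp only [hfN, hcb]; exact nat_lex_lt (hτK a) hi2)
          · exact Nat.cast_lt.mpr (by simp only [hfN, hcb]; omega)
      · -- three distinct colours
        have hva : bits (χ x) ≠ bits (χ a) := fun hh => hca (hbinj hh)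
        have hvb : bits (χ x) ≠ bits (χ b) := fun hh => hcb (hbinj hh)
        obtain ⟨i, hi⟩ := BF_triple s m hms hva hvb hvab
        rcases hi with ⟨h1, h2⟩ | ⟨h1, h2⟩
        · refine ⟨i, Or.inl ⟨?_, ?_⟩⟩
          · exact Nat.cast_lt.mpr (by simp only [hfN]; exact nat_lex_lt (hτK x) h1)
          · exact Nat.cast_lt.mpr (by simp only [hfN]; exact nat_lex_lt (hτK x) h2)
        · refine ⟨i, Or.inr ⟨?_, ?_⟩⟩
          · exact Nat.cast_lt.mpr (by simp only [hfN]; exact nat_lex_lt (hτK a) h1)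
          · exact Nat.cast_lt.mpr (by simp only [hfN]; exact nat_lex_lt (hτK b) h2)

/-- the good family in the small-`Δ` case -/
lemma goodfam_small {α : Type*} [Fintype α] (H : SimpleGraph α)
    (hdeg : ∀ v, (H.neighborSet v).ncard ≤ 2) :
    ∃ f : α → Fin 2 → ℝ, GoodFam H 1 f := by
  obtain ⟨f1, f2, hi1, _, hout⟩ := rep2_exists H hdeg
  refine ⟨fun v => ![f1 v, f2 v], ?_, ?_⟩
  · intro a b hab
    apply hi1
    simpa using hab
  · intro a b x hadj hxa hxb
    rcases hout a b x hadj hxa hxb with h | h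
    · exact ⟨0, by simpa [Out] using h⟩
    · exact ⟨1, by simpa [Out] using h⟩
lemma assembly {V : Type*} [Fintype V] (G : SimpleGraph V) (Y : Set V)
    (hYY : ∀ u v, u ∈ Y → v ∈ Y → ¬ G.Adj u v)
    (hXX : ∀ u v, u ∉ Y → v ∉ Y → ¬ G.Adj u v)
    (hdeg2 : ∀ y ∈ Y, (G.neighborSet y).ncard ≤ 2)
    (k : ℕ) (f : V → Fin (k + 1) → ℝ)
    (hinj : Function.Injective fun v => f v 0)
    (hout : ∀ y ∈ Y, ∀ a b, a ≠ b → G.neighborSet y = {a, b} →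
      ∀ x, x ≠ a → x ≠ b → ∃ i, Out (fun v => f v i) a b x) :
    G.HasBoxRep (k + 2) := by
  classical
  letI : DecidableRel G.Adj := Classical.decRel _
  set τ : V → ℝ := fun v => ((Fintype.equivFin V v : ℕ) : ℝ) with hτdef
  have hτinj : Function.Injective τ := by
    intro a b hab
    have : ((Fintype.equivFin V a : ℕ) : ℝ) = ((Fintype.equivFin V b : ℕ) : ℝ) := hab
    exact (Fintype.equivFin V).injective (Fin.ext (by exact_mod_cast this))
  obtain ⟨M1, hM1⟩ := exists_big (fun p : V × Fin (k + 1) => f p.1 p.2)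
  obtain ⟨M2, hM2⟩ := exists_big τ
  set M : ℝ := max M1 M2 with hMdef
  have hMf : ∀ v i, f v i < M := fun v i => lt_of_lt_of_le (hM1 (v, i)) (le_max_left _ _)
  have hMτ : ∀ v, τ v < M := fun v => lt_of_lt_of_le (hM2 v) (le_max_right _ _)
  -- dual dimension boxes
  set dLo : V → ℝ := fun v => if v ∈ Y then τ v else
    (if h : (G.neighborFinset v).Nonempty then ((G.neighborFinset v).image τ).min' (h.image τ)
      else -1 - τ v) with hdLo
  set dHi : V → ℝ := fun v => if v ∈ Y then τ v else
    (if h : (G.neighborFinset v).Nonempty then ((G.neighborFinset v).image τ).max' (h.image τ)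
      else -1 - τ v) with hdHi
  -- order dimension boxes
  set oLo : V → Fin (k + 1) → ℝ := fun v i => if v ∈ Y then
    (if h : (G.neighborFinset v).Nonempty then
      ((G.neighborFinset v).image (fun a => f a i)).min' (h.image _) else M)
    else f v i with hoLo
  set oHi : V → Fin (k + 1) → ℝ := fun v i => if v ∈ Y then
    (if h : (G.neighborFinset v).Nonempty then
      ((G.neighborFinset v).image (fun a => f a i)).max' (h.image _) else M)
    else f v i with hoHi
  refine ⟨fun v => Fin.cases (dLo v) (oLo v), fun v => Fin.cases (dHi v) (oHi v), ?_, ?_⟩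
  · -- lo ≤ hi
    intro v j
    refine Fin.cases ?_ ?_ j
    · simp only [Fin.cases_zero, hdLo, hdHi]
      by_cases hv : v ∈ Y
      · simp [hv]
      · simp only [hv, if_false]
        by_cases h : (G.neighborFinset v).Nonempty
        · rw [dif_pos h, dif_pos h]
          exact Finset.min'_le _ _ (Finset.max'_mem _ _)
        · rw [dif_neg h, dif_neg h]
    · intro i
      simp only [Fin.cases_succ, hoLo, hoHi]
      by_cases hv : v ∈ Y
      · simp only [hv, if_true]
        by_cases h : (G.neighborFinset v).Nonempty
        · rw [dif_pos h, dif_pos h]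
          exact Finset.min'_le _ _ (Finset.max'_mem _ _)
        · rw [dif_neg h, dif_neg h]
      · simp [hv]
  · intro u v huv
    -- key forward lemma
    have key : ∀ y x, y ∈ Y → x ∉ Y → G.Adj y x → ∀ j : Fin (k + 2),
        max (Fin.cases (dLo y) (oLo y) j : ℝ) (Fin.cases (dLo x) (oLo x) j) ≤
        min (Fin.cases (dHi y) (oHi y) j : ℝ) (Fin.cases (dHi x) (oHi x) j) := by
      intro y x hy hx hadj j
      have hyx : y ∈ G.neighborFinset x := by
        rw [SimpleGraph.mem_neighborFinset]; exact hadj.symm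
      have hxy : x ∈ G.neighborFinset y := by
        rw [SimpleGraph.mem_neighborFinset]; exact hadj
      have hxne : (G.neighborFinset x).Nonempty := ⟨y, hyx⟩
      have hyne : (G.neighborFinset y).Nonempty := ⟨x, hxy⟩
      refine Fin.cases ?_ ?_ j
      · simp only [Fin.cases_zero, hdLo, hdHi, hy, if_true, hx, if_false, dif_pos hxne]
        have h1 : ((G.neighborFinset x).image τ).min' (hxne.image τ) ≤ τ y :=
          Finset.min'_le _ _ (Finset.mem_image_of_mem τ hyx)
        have h2 : τ y ≤ ((G.neighborFinset x).image τ).max' (hxne.image τ) :=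
          Finset.le_max' _ _ (Finset.mem_image_of_mem τ hyx)
        exact max_le (le_min le_rfl h2) (le_min h1 (Finset.min'_le _ _ (Finset.max'_mem _ _)))
      · intro i
        simp only [Fin.cases_succ, hoLo, hoHi, hy, if_true, hx, if_false, dif_pos hyne]
        have h1 : ((G.neighborFinset y).image (fun a => f a i)).min' (hyne.image _) ≤ f x i :=
          Finset.min'_le _ (f x i) (Finset.mem_image_of_mem (fun a => f a i) hxy)
        have h2 : f x i ≤ ((G.neighborFinset y).image (fun a => f a i)).max' (hyne.image _) :=
          Finset.le_max' _ (f x i) (Finset.mem_image_of_mem (fun a => f a i) hxy)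
        exact max_le (le_min (Finset.min'_le _ _ (Finset.max'_mem _ _)) h1) (le_min h2 le_rfl)
    constructor
    · intro hadj j
      by_cases hu : u ∈ Y
      · by_cases hv : v ∈ Y
        · exact absurd hadj (hYY u v hu hv)
        · exact key u v hu hv hadj j
      · by_cases hv : v ∈ Y
        · have := key v u hv hu hadj.symm j
          rw [max_comm, min_comm]; exact this
        · exact absurd hadj (hXX u v hu hv)
    · intro hall
      by_contra hadj
      -- find a violated dimension
      have key2 : ∀ y x, y ∈ Y → x ∉ Y → ¬ G.Adj y x → ∃ j : Fin (k + 2),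
          min (Fin.cases (dHi y) (oHi y) j : ℝ) (Fin.cases (dHi x) (oHi x) j) <
          max (Fin.cases (dLo y) (oLo y) j : ℝ) (Fin.cases (dLo x) (oLo x) j) := by
        intro y x hy hx hnadj
        have hxny : x ∉ G.neighborSet y := fun h => hnadj h
        have hfin : (G.neighborSet y).Finite := Set.toFinite _
        have hcard := hdeg2 y hy
        have hset : G.neighborSet y = ↑(G.neighborFinset y) := by
          simp [SimpleGraph.neighborFinset_def, Set.coe_toFinset]
        interval_cases hn : (G.neighborSet y).ncard
        · -- degree 0
          have hempty : G.neighborSet y = ∅ := (Set.ncard_eq_zero hfin).mp hn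
          have hfe : G.neighborFinset y = ∅ := by
            rw [SimpleGraph.neighborFinset_def, Set.toFinset_eq_empty]; exact hempty
          have hne : ¬ (G.neighborFinset y).Nonempty := by rw [hfe]; simp
          refine ⟨Fin.succ 0, ?_⟩
          simp only [Fin.cases_succ, hoLo, hoHi, hy, if_true, hx, if_false, dif_neg hne]
          have := hMf x 0
          exact lt_of_le_of_lt (min_le_right _ _) (lt_of_lt_of_le this (le_max_left _ _))
        · -- degree 1
          obtain ⟨a, ha⟩ := Set.ncard_eq_one.mp hn
          have hmem : a ∈ G.neighborFinset y := by
            rw [SimpleGraph.mem_neighborFinset, ← SimpleGraph.mem_neighborSet, ha]; rfl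
          have hne : (G.neighborFinset y).Nonempty := ⟨a, hmem⟩
          have hxa : x ≠ a := by rintro rfl; exact hxny (by rw [ha]; rfl)
          have himg : (G.neighborFinset y).image (fun c => f c 0) = {f a 0} := by
            have : G.neighborFinset y = {a} := by
              apply Finset.coe_injective
              rw [← hset, ha]; simp
            rw [this, Finset.image_singleton]
          refine ⟨Fin.succ 0, ?_⟩
          simp only [Fin.cases_succ, hoLo, hoHi, hy, if_true, hx, if_false, dif_pos hne, himg]
          simp only [Finset.min'_singleton, Finset.max'_singleton]
          have : f x 0 ≠ f a 0 := fun h => hxa (hinj h)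
          rcases lt_or_gt_of_ne this with h | h
          · exact lt_of_le_of_lt (min_le_right _ _) (lt_of_lt_of_le h (le_max_left _ _))
          · exact lt_of_le_of_lt (min_le_left _ _) (lt_of_lt_of_le h (le_max_right _ _))
        · -- degree 2
          obtain ⟨a, b, hab, hset2⟩ := Set.ncard_eq_two.mp hn
          have hxa : x ≠ a := by rintro rfl; exact hxny (by rw [hset2]; left; rfl)
          have hxb : x ≠ b := by rintro rfl; exact hxny (by rw [hset2]; right; rfl)
          obtain ⟨i, hOut⟩ := hout y hy a b hab hset2 x hxa hxb
          have hamem : a ∈ G.neighborFinset y := by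
            rw [SimpleGraph.mem_neighborFinset, ← SimpleGraph.mem_neighborSet, hset2]; left; rfl
          have hbmem : b ∈ G.neighborFinset y := by
            rw [SimpleGraph.mem_neighborFinset, ← SimpleGraph.mem_neighborSet, hset2]; right; rfl
          have hne : (G.neighborFinset y).Nonempty := ⟨a, hamem⟩
          have hsub : ∀ c ∈ G.neighborFinset y, c = a ∨ c = b := by
            intro c hc
            rw [SimpleGraph.mem_neighborFinset, ← SimpleGraph.mem_neighborSet, hset2] at hc
            exact hc
          refine ⟨Fin.succ i, ?_⟩
          simp only [Fin.cases_succ, hoLo, hoHi, hy, if_true, hx, if_false, dif_pos hne]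
          rcases hOut with ⟨h1, h2⟩ | ⟨h1, h2⟩
          · -- x below both: min' > f x i
            have : f x i < ((G.neighborFinset y).image (fun c => f c i)).min' (hne.image _) := by
              obtain ⟨c, hc, hceq⟩ := Finset.mem_image.mp
                (((G.neighborFinset y).image (fun c => f c i)).min'_mem (hne.image _))
              rw [← hceq]
              rcases hsub c hc with rfl | rfl
              · exact h1
              · exact h2
            exact lt_of_le_of_lt (min_le_right _ _) (lt_of_lt_of_le this (le_max_left _ _))
          · -- x above both: max' < f x i
            have : ((G.neighborFinset y).image (fun c => f c i)).max' (hne.image _) < f x i := by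
              obtain ⟨c, hc, hceq⟩ := Finset.mem_image.mp
                (((G.neighborFinset y).image (fun c => f c i)).max'_mem (hne.image _))
              rw [← hceq]
              rcases hsub c hc with rfl | rfl
              · exact h1
              · exact h2
            exact lt_of_le_of_lt (min_le_left _ _) (lt_of_lt_of_le this (le_max_right _ _))
      by_cases hu : u ∈ Y
      · by_cases hv : v ∈ Y
        · -- both in Y : dual dimension, distinct points
          have : τ u ≠ τ v := fun h => huv (hτinj h)
          have h0 := hall 0
          simp only [Fin.cases_zero, hdLo, hdHi, hu, hv, if_true] at h0
          exact absurd h0 (not_le.mpr (min_lt_max.mpr this))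
        · obtain ⟨j, hj⟩ := key2 u v hu hv hadj
          exact absurd (hall j) (not_le.mpr hj)
      · by_cases hv : v ∈ Y
        · obtain ⟨j, hj⟩ := key2 v u hv hu (fun h => hadj h.symm)
          have := hall j
          rw [max_comm, min_comm] at this
          exact absurd this (not_le.mpr hj)
        · -- both outside Y : order dimension 0, distinct points
          have : f u 0 ≠ f v 0 := fun h => huv (hinj h)
          have h0 := hall (Fin.succ 0)
          simp only [Fin.cases_succ, hoLo, hoHi, hu, hv, if_false] at h0
          exact absurd h0 (not_le.mpr (min_lt_max.mpr this))




end BoxAux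

end

open BoxAux in
/-- Let `G` be bipartite with bipartition `{X, Y}` where every vertex of `Y` has degree at
most 2 and no two distinct vertices of `Y` have the same neighbourhood. If `Δ(G) ≥ 2`,
then `box(G) ≤ ⌈log₂ log₂ Δ⌉ + 3`. -/
theorem boxicity_special_bipartite {V : Type*} [Fintype V] (G : SimpleGraph V)
    (X Y : Set V) (hcover : X ∪ Y = Set.univ) (hdisj : Disjoint X Y)
    (hbip : ∀ u v, G.Adj u v → (u ∈ X ∧ v ∈ Y) ∨ (u ∈ Y ∧ v ∈ X))
    (hdeg : ∀ y ∈ Y, (G.neighborSet y).ncard ≤ 2)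
    (hnbr : ∀ y₁ ∈ Y, ∀ y₂ ∈ Y, y₁ ≠ y₂ → G.neighborSet y₁ ≠ G.neighborSet y₂)
    (Δ : ℕ) (hΔ : Δ = @SimpleGraph.maxDegree V G _ (Classical.decRel _))
    (h2 : 2 ≤ Δ) :
    G.boxicity ≤ Nat.clog 2 (Nat.clog 2 Δ) + 3 := by
  classical
  letI : DecidableRel G.Adj := Classical.decRel _
  -- the host graph on the `X`-side
  set H : SimpleGraph V := {
    Adj := fun a b => a ≠ b ∧ ∃ y ∈ Y, G.neighborSet y = {a, b}
    symm := ⟨by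
      rintro a b ⟨hne, y, hy, hN⟩
      exact ⟨hne.symm, y, hy, by rw [hN]; exact Set.pair_comm a b⟩⟩
    loopless := ⟨by rintro a ⟨hne, _⟩; exact hne rfl⟩ } with hH
  -- degree bound for the host graph
  have hdegΔ : ∀ v, (G.neighborSet v).ncard ≤ Δ := by
    intro v
    have h1 : (G.neighborSet v).ncard = (G.neighborFinset v).card := by
      rw [SimpleGraph.neighborFinset_def]
      exact Set.ncard_eq_toFinset_card' _
    rw [h1, hΔ]
    exact G.degree_le_maxDegree v
  have hHdeg : ∀ v, (H.neighborSet v).ncard ≤ Δ := by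
    intro v
    have key : ∀ b ∈ H.neighborSet v, H.Adj v b := fun b hb => hb
    set F : V → V := fun b => if h : H.Adj v b then Classical.choose h.2 else v with hF
    have hFmem : ∀ b ∈ H.neighborSet v, F b ∈ G.neighborSet v := by
      intro b hb
      have hadj : H.Adj v b := hb
      simp only [hF, dif_pos hadj]
      obtain ⟨hy, hN⟩ := Classical.choose_spec hadj.2
      have hv : v ∈ G.neighborSet (Classical.choose hadj.2) := by rw [hN]; left; rfl
      exact SimpleGraph.mem_neighborSet _ _ _ |>.mpr (hv.symm)
    have hFinj : Set.InjOn F (H.neighborSet v) := by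
      intro b hb b' hb' hbb
      have hadj : H.Adj v b := hb
      have hadj' : H.Adj v b' := hb'
      simp only [hF, dif_pos hadj, dif_pos hadj'] at hbb
      obtain ⟨hy, hN⟩ := Classical.choose_spec hadj.2
      obtain ⟨hy', hN'⟩ := Classical.choose_spec hadj'.2
      rw [hbb] at hN
      rw [hN] at hN'
      have hbmem : b ∈ ({v, b'} : Set V) := by rw [← hN']; right; rfl
      rcases hbmem with hb1 | hb1
      · exact absurd hb1.symm hadj.1
      · exact hb1
    calc (H.neighborSet v).ncard ≤ (G.neighborSet v).ncard :=
          Set.ncard_le_ncard_of_injOn F hFmem hFinj (Set.toFinite _)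
      _ ≤ Δ := hdegΔ v
  -- bipartite separation facts
  have hYY : ∀ u v, u ∈ Y → v ∈ Y → ¬ G.Adj u v := by
    intro u v hu hv hadj
    rcases hbip u v hadj with ⟨hx, _⟩ | ⟨_, hx⟩
    · exact Set.disjoint_left.mp hdisj hx hu
    · exact Set.disjoint_left.mp hdisj hx hv
  have hXX : ∀ u v, u ∉ Y → v ∉ Y → ¬ G.Adj u v := by
    intro u v hu hv hadj
    rcases hbip u v hadj with ⟨_, hx⟩ | ⟨hx, _⟩
    · exact hv hx
    · exact hu hx
  -- conclude from a good family
  have main : ∀ k (f : V → Fin (k + 1) → ℝ), GoodFam H k f → G.HasBoxRep (k + 2) := by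
    intro k f hgf
    refine assembly G Y hYY hXX hdeg k f hgf.1 ?_
    intro y hy a b hab hN x hxa hxb
    exact hgf.2 a b x ⟨hab, y, hy, hN⟩ hxa hxb
  have hboxle : ∀ n, G.HasBoxRep n → G.boxicity ≤ n := fun n hn => Nat.sInf_le hn
  rcases eq_or_lt_of_le h2 with hΔ2 | hΔ3
  · -- Δ = 2
    have hH2 : ∀ v, (H.neighborSet v).ncard ≤ 2 := by
      intro v; have := hHdeg v; omega
    obtain ⟨f, hgf⟩ := goodfam_small H hH2
    have hbr := main 1 f hgf
    have harith : Nat.clog 2 (Nat.clog 2 Δ) = 0 := by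
      rw [← hΔ2]
      have hc2 : Nat.clog 2 2 = 1 := Nat.clog_eq_one (by norm_num) (by norm_num)
      rw [hc2, Nat.clog_one_right]
    rw [harith]
    exact hboxle 3 hbr
  · -- Δ ≥ 3
    set m0 := Nat.clog 2 Δ with hm0
    set t := Nat.clog 2 m0 with ht
    have hΔm0 : Δ ≤ 2 ^ m0 := Nat.le_pow_clog (by norm_num) Δ
    have hm02 : 2 ≤ m0 := by
      have := (Nat.lt_clog_iff_pow_lt (b := 2) (x := Δ) (by norm_num) (y := 1)).mpr
        (by simpa using hΔ3)
      omega
    have ht1 : 1 ≤ t := Nat.clog_pos (by norm_num) hm02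
    have hm0t : m0 ≤ 2 ^ t := Nat.le_pow_clog (by norm_num) m0
    set m := Nat.clog 2 (Δ + 1) with hm
    have hDm : Δ + 1 ≤ 2 ^ m := Nat.le_pow_clog (by norm_num) (Δ + 1)
    have hmle : m ≤ m0 + 1 := by
      rw [hm, Nat.clog_le_iff_le_pow (by norm_num)]
      have h1 : (1:ℕ) ≤ 2 ^ m0 := Nat.one_le_two_pow
      have h2 : (2:ℕ) ^ (m0 + 1) = 2 * 2 ^ m0 := by ring
      omega
    have hms : m ≤ 2 ^ (t + 1) - 1 := by
      have h1 : (2:ℕ) ^ (t + 1) = 2 * 2 ^ t := by ring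
      have h2 : (2:ℕ) ≤ 2 ^ t := by
        calc (2:ℕ) = 2 ^ 1 := by norm_num
          _ ≤ 2 ^ t := Nat.pow_le_pow_right (by norm_num) ht1
      omega
    obtain ⟨f, hgf⟩ := goodfam_large H t Δ m hHdeg hDm hms
    have hbr := main (t + 1) f hgf
    exact hboxle (t + 3) hbr
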